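/- Let ν be a finitely supported multi-index, (b_j) nonnegative reals, C₅, C₆ ≥ 0. Suppose p_m ≤ C₅(|m|+1)! b^m for all m ≤ ν and r_m ≤ C₆ b^m for all m ≤ ν. Then ∑_{m ≤ ν} (ν choose m) p_m r_{ν−m} ≤ C₅C₆ (|ν|+2)! b^ν. -/

import Mathlib

open Finset

/-- Rectangle-to-diagonal resummation. -/
lemma rect_to_diag (A B : ℕ) (h : ℕ → ℕ → ℝ)
    (hA : ∀ i j, A < i → h i j = 0) (hB : ∀ i j, B < j → h i j = 0) :
    ∑ i ∈ Finset.Iic A, ∑ j ∈ Finset.Iic B, h i j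
      = ∑ ℓ ∈ Finset.range (A + B + 1), ∑ p ∈ Finset.HasAntidiagonal.antidiagonal ℓ, h p.1 p.2 := by
  rw [← Finset.sum_product']
  have hdisj : (↑(Finset.range (A + B + 1)) : Set ℕ).PairwiseDisjoint
      (fun ℓ => (Finset.HasAntidiagonal.antidiagonal ℓ : Finset (ℕ × ℕ))) := by
    intro x _ y _ hxy
    simp only [Function.onFun]
    rw [Finset.disjoint_left]
    intro p hp hp'
    rw [Finset.HasAntidiagonal.mem_antidiagonal] at hp hp'
    exact hxy (hp ▸ hp')
  rw [← Finset.sum_biUnion hdisj]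
  apply Finset.sum_subset
  · intro p hp
    rw [Finset.mem_product, Finset.mem_Iic, Finset.mem_Iic] at hp
    rw [Finset.mem_biUnion]
    exact ⟨p.1 + p.2, Finset.mem_range.2 (by omega), Finset.HasAntidiagonal.mem_antidiagonal.2 rfl⟩
  · intro p hp hnp
    rw [Finset.mem_product, Finset.mem_Iic, Finset.mem_Iic] at hnp
    rcases not_and_or.1 hnp with h1 | h1
    · exact hA _ _ (by omega)
    · exact hB _ _ (by omega)

lemma Iic_pi_eq (s : ℕ) (ν : Fin s → ℕ) :
    Finset.Iic ν = Fintype.piFinset (fun i => Finset.Iic (ν i)) := by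
  ext m; simp [Fintype.mem_piFinset, Pi.le_def]

/-- Multivariate Vandermonde packaged with an arbitrary weight. -/
lemma vander : ∀ (s : ℕ) (g : ℕ → ℝ) (ν : Fin s → ℕ),
    ∑ m ∈ Finset.Iic ν, (∏ j, ((ν j).choose (m j) : ℝ)) * g (∑ j, m j)
      = ∑ ℓ ∈ Finset.range ((∑ j, ν j) + 1), (((∑ j, ν j).choose ℓ : ℝ)) * g ℓ := by
  intro s
  induction s with
  | zero =>
    intro g ν
    have h1 : Finset.Iic ν = {ν} := by
      ext m; simp [Subsingleton.elim m ν]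
    simp [h1]
  | succ n ih =>
    intro g ν
    rw [Iic_pi_eq]
    have hsplit : Fintype.piFinset (fun i => Finset.Iic (ν i)) =
        (Finset.Iic (ν 0) ×ˢ Fintype.piFinset (Fin.tail (fun i => Finset.Iic (ν i)))).map
          (Fin.consEquiv _).toEmbedding := by
      have := Finset.filter_piFinset_eq_map_consEquiv (fun i => Finset.Iic (ν i))
        (fun _ => True)
      simpa using this
    rw [hsplit, Finset.sum_map, Finset.sum_product]
    have key : ∀ a ∈ Finset.Iic (ν 0),
        ∑ m' ∈ Fintype.piFinset (Fin.tail (fun i => Finset.Iic (ν i))),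
          (∏ j, ((ν j).choose (((Fin.consEquiv (fun _ => ℕ)).toEmbedding (a, m')) j) : ℝ)) *
            g (∑ j, ((Fin.consEquiv (fun _ => ℕ)).toEmbedding (a, m')) j)
        = ((ν 0).choose a : ℝ) *
            ∑ ℓ ∈ Finset.range ((∑ j, Fin.tail ν j) + 1),
              (((∑ j, Fin.tail ν j).choose ℓ : ℝ)) * g (a + ℓ) := by
      intro a _
      have := ih (fun ℓ => g (a + ℓ)) (Fin.tail ν)
      rw [Iic_pi_eq] at this
      rw [show Fin.tail (fun i => Finset.Iic (ν i)) = fun i => Finset.Iic (Fin.tail ν i) from rfl]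
      have h1 : ∀ m' ∈ Fintype.piFinset (fun i => Finset.Iic (Fin.tail ν i)),
          (∏ j, ((ν j).choose (((Fin.consEquiv (fun _ => ℕ)).toEmbedding (a, m')) j) : ℝ)) *
            g (∑ j, ((Fin.consEquiv (fun _ => ℕ)).toEmbedding (a, m')) j)
          = ((ν 0).choose a : ℝ) *
            ((∏ j, ((Fin.tail ν j).choose (m' j) : ℝ)) * g (a + ∑ j, m' j)) := by
        intro m' _
        show (∏ j, ((ν j).choose ((Fin.cons a m' : ∀ _, ℕ) j) : ℝ)) *
            g (∑ j, (Fin.cons a m' : ∀ _, ℕ) j)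
          = ((ν 0).choose a : ℝ) *
            ((∏ j, ((Fin.tail ν j).choose (m' j) : ℝ)) * g (a + ∑ j, m' j))
        rw [Fin.prod_univ_succ, Fin.sum_univ_succ]
        simp only [Fin.cons_zero, Fin.cons_succ, Fin.tail]
        ring
      rw [Finset.sum_congr rfl h1, ← Finset.mul_sum, this]
    rw [Finset.sum_congr rfl key]
    -- now: ∑ a ∈ Iic (ν 0), C(ν0,a) * ∑ ℓ, C(N',ℓ) g (a+ℓ) = RHS
    have hrect := rect_to_diag (ν 0) (∑ j, Fin.tail ν j)
      (fun i k => ((ν 0).choose i : ℝ) * (((∑ j, Fin.tail ν j).choose k : ℝ)) * g (i + k))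
      (fun i k hi => by simp [Nat.choose_eq_zero_of_lt hi])
      (fun i k hk => by simp [Nat.choose_eq_zero_of_lt hk])
    have hL : ∑ a ∈ Finset.Iic (ν 0), ((ν 0).choose a : ℝ) *
        ∑ ℓ ∈ Finset.range ((∑ j, Fin.tail ν j) + 1),
          (((∑ j, Fin.tail ν j).choose ℓ : ℝ)) * g (a + ℓ)
        = ∑ a ∈ Finset.Iic (ν 0), ∑ ℓ ∈ Finset.Iic (∑ j, Fin.tail ν j),
            ((ν 0).choose a : ℝ) * (((∑ j, Fin.tail ν j).choose ℓ : ℝ)) * g (a + ℓ) := by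
      refine Finset.sum_congr rfl (fun a _ => ?_)
      rw [Finset.mul_sum]
      rw [show Finset.range ((∑ j, Fin.tail ν j) + 1) = Finset.Iic (∑ j, Fin.tail ν j) from
        by ext x; simp [Nat.lt_succ_iff]]
      exact Finset.sum_congr rfl (fun ℓ _ => by ring)
    rw [hL, hrect]
    have hν : ∑ j, ν j = ν 0 + ∑ j, Fin.tail ν j := by
      rw [Fin.sum_univ_succ]; rfl
    rw [hν]
    refine Finset.sum_congr rfl (fun ℓ hℓ => ?_)
    rw [Nat.add_choose_eq, Nat.cast_sum, Finset.sum_mul]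
    refine Finset.sum_congr rfl (fun p hp => ?_)
    rw [Finset.HasAntidiagonal.mem_antidiagonal] at hp
    rw [← hp]
    push_cast
    ring

lemma sum_choose_factorial_le (n : ℕ) :
    ∑ ℓ ∈ Finset.range (n + 1), n.choose ℓ * Nat.factorial (ℓ + 1)
      ≤ Nat.factorial (n + 2) := by
  have hterm : ∀ ℓ ∈ Finset.range (n + 1),
      n.choose ℓ * Nat.factorial (ℓ + 1) ≤ (n + 1) * Nat.factorial n := by
    intro ℓ hℓ
    rw [Finset.mem_range] at hℓ
    have hℓn : ℓ ≤ n := by omega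
    have h1 : n.choose ℓ * Nat.factorial ℓ ≤ Nat.factorial n := by
      calc n.choose ℓ * Nat.factorial ℓ
          ≤ n.choose ℓ * Nat.factorial ℓ * Nat.factorial (n - ℓ) :=
            Nat.le_mul_of_pos_right _ (Nat.factorial_pos _)
        _ = Nat.factorial n := Nat.choose_mul_factorial_mul_factorial hℓn
    calc n.choose ℓ * Nat.factorial (ℓ + 1)
        = (ℓ + 1) * (n.choose ℓ * Nat.factorial ℓ) := by
          rw [Nat.factorial_succ]; ring
      _ ≤ (n + 1) * Nat.factorial n :=
          Nat.mul_le_mul (by omega) h1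
  calc ∑ ℓ ∈ Finset.range (n + 1), n.choose ℓ * Nat.factorial (ℓ + 1)
      ≤ ∑ _ℓ ∈ Finset.range (n + 1), (n + 1) * Nat.factorial n :=
        Finset.sum_le_sum hterm
    _ = (n + 1) * ((n + 1) * Nat.factorial n) := by
        rw [Finset.sum_const, Finset.card_range]; ring
    _ = (n + 1) * Nat.factorial (n + 1) := by rw [Nat.factorial_succ]
    _ ≤ (n + 2) * Nat.factorial (n + 1) := Nat.mul_le_mul (by omega) le_rfl
    _ = Nat.factorial (n + 2) := (Nat.factorial_succ _).symm

/-- Leibniz-type convolution estimate: if `p_m ≤ C₅ (|m|+1)! b^m` and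
`r_m ≤ C₆ b^m` for all `m ≤ ν`, then
`∑_{m ≤ ν} (ν choose m) p_m r_{ν−m} ≤ C₅ C₆ (|ν|+2)! b^ν`. -/
theorem stmt19 (s : ℕ) (ν : Fin s → ℕ) (b : Fin s → ℝ) (hb : ∀ j, 0 ≤ b j)
    (C5 C6 : ℝ) (hC5 : 0 ≤ C5) (hC6 : 0 ≤ C6)
    (p r : (Fin s → ℕ) → ℝ)
    (hp0 : ∀ m, m ≤ ν → 0 ≤ p m) (hr0 : ∀ m, m ≤ ν → 0 ≤ r m)
    (hp : ∀ m, m ≤ ν →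
      p m ≤ C5 * (Nat.factorial ((∑ j, m j) + 1) : ℝ) * ∏ j, b j ^ m j)
    (hr : ∀ m, m ≤ ν → r m ≤ C6 * ∏ j, b j ^ m j) :
    ∑ m ∈ Finset.Iic ν, (∏ j, ((ν j).choose (m j) : ℝ)) * p m * r (ν - m)
      ≤ C5 * C6 * (Nat.factorial ((∑ j, ν j) + 2) : ℝ) * ∏ j, b j ^ ν j := by
  set n := ∑ j, ν j with hn
  have step1 : ∑ m ∈ Finset.Iic ν, (∏ j, ((ν j).choose (m j) : ℝ)) * p m * r (ν - m)
      ≤ ∑ m ∈ Finset.Iic ν, (∏ j, ((ν j).choose (m j) : ℝ)) *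
          ((C5 * C6 * (Nat.factorial ((∑ j, m j) + 1) : ℝ)) * ∏ j, b j ^ ν j) := by
    refine Finset.sum_le_sum (fun m hm => ?_)
    rw [Finset.mem_Iic] at hm
    have hmν : ν - m ≤ ν := by
      intro j; simp only [Pi.sub_apply]; omega
    have hchoose : (0:ℝ) ≤ ∏ j, ((ν j).choose (m j) : ℝ) :=
      Finset.prod_nonneg (fun j _ => by positivity)
    have hbm : (0:ℝ) ≤ ∏ j, b j ^ m j := Finset.prod_nonneg (fun j _ => pow_nonneg (hb j) _)
    have h1 : p m * r (ν - m) ≤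
        (C5 * (Nat.factorial ((∑ j, m j) + 1) : ℝ) * ∏ j, b j ^ m j) *
        (C6 * ∏ j, b j ^ (ν - m) j) := by
      apply mul_le_mul (hp m hm) (hr _ hmν) (hr0 _ hmν)
      exact mul_nonneg (mul_nonneg hC5 (Nat.cast_nonneg _)) hbm
    have h2 : (∏ j, b j ^ m j) * (∏ j, b j ^ (ν - m) j) = ∏ j, b j ^ ν j := by
      rw [← Finset.prod_mul_distrib]
      refine Finset.prod_congr rfl (fun j _ => ?_)
      rw [← pow_add, Pi.sub_apply, Nat.add_sub_cancel' (hm j)]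
    calc (∏ j, ((ν j).choose (m j) : ℝ)) * p m * r (ν - m)
        = (∏ j, ((ν j).choose (m j) : ℝ)) * (p m * r (ν - m)) := by ring
      _ ≤ (∏ j, ((ν j).choose (m j) : ℝ)) *
            ((C5 * (Nat.factorial ((∑ j, m j) + 1) : ℝ) * ∏ j, b j ^ m j) *
            (C6 * ∏ j, b j ^ (ν - m) j)) := by
          apply mul_le_mul_of_nonneg_left h1 hchoose
      _ = (∏ j, ((ν j).choose (m j) : ℝ)) *
            ((C5 * C6 * (Nat.factorial ((∑ j, m j) + 1) : ℝ)) *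
              ((∏ j, b j ^ m j) * (∏ j, b j ^ (ν - m) j))) := by ring
      _ = (∏ j, ((ν j).choose (m j) : ℝ)) *
            ((C5 * C6 * (Nat.factorial ((∑ j, m j) + 1) : ℝ)) * ∏ j, b j ^ ν j) := by
          rw [h2]
  have hv := vander s (fun ℓ => (Nat.factorial (ℓ + 1) : ℝ)) ν
  have step2 : ∑ m ∈ Finset.Iic ν, (∏ j, ((ν j).choose (m j) : ℝ)) *
        ((C5 * C6 * (Nat.factorial ((∑ j, m j) + 1) : ℝ)) * ∏ j, b j ^ ν j)
      = (C5 * C6 * ∏ j, b j ^ ν j) *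
        ∑ ℓ ∈ Finset.range (n + 1), ((n.choose ℓ : ℝ)) * (Nat.factorial (ℓ + 1) : ℝ) := by
    calc ∑ m ∈ Finset.Iic ν, (∏ j, ((ν j).choose (m j) : ℝ)) *
          ((C5 * C6 * (Nat.factorial ((∑ j, m j) + 1) : ℝ)) * ∏ j, b j ^ ν j)
        = (C5 * C6 * ∏ j, b j ^ ν j) *
          ∑ m ∈ Finset.Iic ν, (∏ j, ((ν j).choose (m j) : ℝ)) *
            (Nat.factorial ((∑ j, m j) + 1) : ℝ) := by
          rw [Finset.mul_sum]
          exact Finset.sum_congr rfl (fun m _ => by ring)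
      _ = (C5 * C6 * ∏ j, b j ^ ν j) *
          ∑ ℓ ∈ Finset.range (n + 1), ((n.choose ℓ : ℝ)) * (Nat.factorial (ℓ + 1) : ℝ) := by
          rw [hv]
  rw [step2] at step1
  refine le_trans step1 ?_
  have hbν : (0:ℝ) ≤ ∏ j, b j ^ ν j := Finset.prod_nonneg (fun j _ => pow_nonneg (hb j) _)
  have hsum : ∑ ℓ ∈ Finset.range (n + 1), ((n.choose ℓ : ℝ)) * (Nat.factorial (ℓ + 1) : ℝ)
      ≤ (Nat.factorial (n + 2) : ℝ) := by
    have := sum_choose_factorial_le n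
    calc ∑ ℓ ∈ Finset.range (n + 1), ((n.choose ℓ : ℝ)) * (Nat.factorial (ℓ + 1) : ℝ)
        = ((∑ ℓ ∈ Finset.range (n + 1), n.choose ℓ * Nat.factorial (ℓ + 1) : ℕ) : ℝ) := by
          rw [Nat.cast_sum]
          exact Finset.sum_congr rfl (fun ℓ _ => (Nat.cast_mul _ _).symm)
      _ ≤ (Nat.factorial (n + 2) : ℝ) := by exact_mod_cast this
  calc (C5 * C6 * ∏ j, b j ^ ν j) *
        ∑ ℓ ∈ Finset.range (n + 1), ((n.choose ℓ : ℝ)) * (Nat.factorial (ℓ + 1) : ℝ)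
      ≤ (C5 * C6 * ∏ j, b j ^ ν j) * (Nat.factorial (n + 2) : ℝ) := by
        apply mul_le_mul_of_nonneg_left hsum
          (mul_nonneg (mul_nonneg hC5 hC6) hbν)
    _ = C5 * C6 * (Nat.factorial (n + 2) : ℝ) * ∏ j, b j ^ ν j := by ring
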